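/- Let $X \in C^2([0,T]^2;\mathbb{R}^d)$ and define the symmetrized 2D signature by $\langle \mathbf{S}^{\mathrm{Sym}}_{\mathbf{s}\mathbf{t}}(X), w\rangle = \sum_{\nu\in\Sigma_n}\langle \mathbf{S}_{\mathbf{s}\mathbf{t}}(X),(w,\nu)\rangle$ for a word $w$ of length $n$. Then for $s_1 \le u_1 \le t_1$, the Chen relation holds: $\langle \mathbf{S}^{\mathrm{Sym}}_{\mathbf{s}\mathbf{t}}(X), w\rangle = \sum_{k=0}^{n} \langle \mathbf{S}^{\mathrm{Sym}}_{(s_1,s_2),(u_1,t_2)}(X), (w_1\cdots w_k)\rangle\,\langle \mathbf{S}^{\mathrm{Sym}}_{(u_1,s_2),(t_1,t_2)}(X), (w_{k+1}\cdots w_n)\rangle$, where the empty-word coefficients equal 1. -/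

import Mathlib

open MeasureTheory

/-- The mixed partial derivative `∂²f/∂r₁∂r₂`. -/
noncomputable def d12 (f : ℝ × ℝ → ℝ) (p : ℝ × ℝ) : ℝ :=
  deriv (fun a => deriv (fun b => f (a, b)) p.2) p.1

/-- The 1D simplex `Δ_{a,b}^n`. -/
def simplex (a b : ℝ) (n : ℕ) : Set (Fin n → ℝ) :=
  {r | (∀ i, a ≤ r i ∧ r i ≤ b) ∧ ∀ i j : Fin n, i ≤ j → r i ≤ r j}

/-- The 2D simplex `Δ^n_{[s,t]}`: `n`-tuples of points of the rectangle, increasing in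
both coordinates (recorded as a pair of increasing coordinate sequences). -/
def simplex2 (s1 t1 s2 t2 : ℝ) (n : ℕ) : Set ((Fin n → ℝ) × (Fin n → ℝ)) :=
  {p | p.1 ∈ simplex s1 t1 n ∧ p.2 ∈ simplex s2 t2 n}

/-- The full 2D signature coefficient
`⟨S_{s,t}(X), (w, ν)⟩ = ∫_{Δⁿ_{[s,t]}} ∏ᵢ ∂₁₂X^{wᵢ}(r₁ⁱ, r₂^{ν(i)})`. -/
noncomputable def sigFull {d : ℕ} (X : Fin d → ℝ × ℝ → ℝ) (s1 s2 t1 t2 : ℝ)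
    {n : ℕ} (w : Fin n → Fin d) (ν : Equiv.Perm (Fin n)) : ℝ :=
  ∫ p in simplex2 s1 t1 s2 t2 n, ∏ i, d12 (X (w i)) (p.1 i, p.2 (ν i))

/-- The symmetrized 2D signature `⟨S^Sym,(w)⟩ = ∑_ν ⟨S,(w,ν)⟩`. -/
noncomputable def sigSym {d : ℕ} (X : Fin d → ℝ × ℝ → ℝ) (s1 s2 t1 t2 : ℝ)
    {n : ℕ} (w : Fin n → Fin d) : ℝ :=
  ∑ ν : Equiv.Perm (Fin n), sigFull X s1 s2 t1 t2 w ν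

/-! ### auxiliary lemmas -/

theorem d12_eq (f : ℝ × ℝ → ℝ) (hf : ContDiff ℝ 2 f) (p : ℝ × ℝ) :
    d12 f p = fderiv ℝ (fun q => fderiv ℝ f q (0, 1)) p (1, 0) := by
  have hf1 : Differentiable ℝ f := hf.differentiable (by norm_num)
  have hF1 : ContDiff ℝ 1 (fun q => fderiv ℝ f q (0, 1)) :=
    (hf.fderiv_right (le_refl _)).clm_apply contDiff_const
  have hinner : ∀ a : ℝ, (fun a => deriv (fun b => f (a, b)) p.2) a
      = fderiv ℝ f (a, p.2) (0, 1) := by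
    intro a
    have h1 : HasDerivAt (fun b => (a, b)) ((0 : ℝ), (1 : ℝ)) p.2 :=
      (hasDerivAt_const p.2 a).prodMk (hasDerivAt_id p.2)
    exact ((hf1 (a, p.2)).hasFDerivAt.comp_hasDerivAt p.2 h1).deriv
  unfold d12
  rw [funext hinner]
  have h1 : HasDerivAt (fun a : ℝ => (a, p.2)) ((1 : ℝ), (0 : ℝ)) p.1 :=
    (hasDerivAt_id p.1).prodMk (hasDerivAt_const p.1 p.2)
  have h2 := ((hF1.differentiable (by norm_num) (p.1, p.2)).hasFDerivAt.comp_hasDerivAt p.1 h1).deriv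
  simpa [Function.comp_def] using h2

theorem continuous_d12 (f : ℝ × ℝ → ℝ) (hf : ContDiff ℝ 2 f) : Continuous (d12 f) := by
  have hF1 : ContDiff ℝ 1 (fun q => fderiv ℝ f q (0, 1)) :=
    (hf.fderiv_right (le_refl _)).clm_apply contDiff_const
  have : Continuous (fun p => fderiv ℝ (fun q => fderiv ℝ f q (0, 1)) p (1, 0)) :=
    ((hF1.fderiv_right (m := 0) (by norm_num)).clm_apply contDiff_const).continuous
  exact this.congr fun p => (d12_eq f hf p).symm

theorem isCompact_simplex (a b : ℝ) (n : ℕ) : IsCompact (simplex a b n) := by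
  refine (isCompact_univ_pi fun _ : Fin n => isCompact_Icc (a := a) (b := b)).of_isClosed_subset
    ?_ ?_
  · have h1 : IsClosed (⋂ i : Fin n, {r : Fin n → ℝ | a ≤ r i ∧ r i ≤ b}) :=
      isClosed_iInter fun i =>
        ((isClosed_le continuous_const (continuous_apply i)).inter
          (isClosed_le (continuous_apply i) continuous_const))
    have h2 : IsClosed (⋂ (i : Fin n) (j : Fin n), {r : Fin n → ℝ | i ≤ j → r i ≤ r j}) := by
      refine isClosed_iInter fun i => isClosed_iInter fun j => ?_
      by_cases hij : i ≤ j
      · have : {r : Fin n → ℝ | i ≤ j → r i ≤ r j} = {r : Fin n → ℝ | r i ≤ r j} := by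
          ext r; simp [hij]
        rw [this]; exact isClosed_le (continuous_apply i) (continuous_apply j)
      · have : {r : Fin n → ℝ | i ≤ j → r i ≤ r j} = Set.univ := by
          ext r; simp [hij]
        rw [this]; exact isClosed_univ
    have : simplex a b n =
        (⋂ i : Fin n, {r : Fin n → ℝ | a ≤ r i ∧ r i ≤ b}) ∩
          ⋂ (i : Fin n) (j : Fin n), {r : Fin n → ℝ | i ≤ j → r i ≤ r j} := by
      ext r
      simp only [simplex, Set.mem_setOf_eq, Set.mem_inter_iff, Set.mem_iInter]
    rw [this]; exact h1.inter h2
  · intro r hr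
    simp only [Set.mem_univ_pi]
    exact fun i => ⟨(hr.1 i).1, (hr.1 i).2⟩

theorem measurableSet_simplex (a b : ℝ) (n : ℕ) : MeasurableSet (simplex a b n) :=
  (isCompact_simplex a b n).isClosed.measurableSet

theorem hyperplane_null (n : ℕ) (i j : Fin n) (hij : i ≠ j) :
    volume {y : Fin n → ℝ | y i = y j} = 0 := by
  have hsub : {y : Fin n → ℝ | y i = y j} ⊆
      (LinearMap.ker ((LinearMap.proj i : (Fin n → ℝ) →ₗ[ℝ] ℝ) - LinearMap.proj j) :
        Submodule ℝ (Fin n → ℝ)) := by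
    intro y hy
    simpa [LinearMap.mem_ker, sub_eq_zero] using hy
  refine measure_mono_null hsub (Measure.addHaar_submodule _ _ ?_)
  intro h
  have hmem : Pi.single i (1 : ℝ) ∈ LinearMap.ker
      ((LinearMap.proj i : (Fin n → ℝ) →ₗ[ℝ] ℝ) - LinearMap.proj j) := by
    rw [h]; trivial
  simp [LinearMap.mem_ker, sub_eq_zero, Pi.single_eq_same, Pi.single_eq_of_ne hij.symm] at hmem

theorem notInjective_null (n : ℕ) :
    volume {y : Fin n → ℝ | ¬ Function.Injective y} = 0 := by
  have hsub : {y : Fin n → ℝ | ¬ Function.Injective y} ⊆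
      ⋃ (i : Fin n) (j : Fin n), {y : Fin n → ℝ | i ≠ j ∧ y i = y j} := by
    intro y hy
    simp only [Function.Injective, not_forall] at hy
    obtain ⟨i, j, hval, hne⟩ := hy
    exact Set.mem_iUnion.2 ⟨i, Set.mem_iUnion.2 ⟨j, hne, hval⟩⟩
  refine measure_mono_null hsub (measure_iUnion_null fun i => measure_iUnion_null fun j => ?_)
  by_cases hij : i = j
  · have : {y : Fin n → ℝ | i ≠ j ∧ y i = y j} = ∅ := by ext y; simp [hij]
    simp [this]
  · exact measure_mono_null (fun y hy => hy.2) (hyperplane_null n i j hij)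


/-! ### Lemma A: symmetrization -/

/-- The coordinate-permutation measurable equivalence `q ↦ q ∘ ν`. -/
noncomputable def permEquiv (n : ℕ) (ν : Equiv.Perm (Fin n)) : (Fin n → ℝ) ≃ᵐ (Fin n → ℝ) :=
  MeasurableEquiv.piCongrLeft (fun _ : Fin n => ℝ) ν.symm

theorem permEquiv_apply (n : ℕ) (ν : Equiv.Perm (Fin n)) (q : Fin n → ℝ) (j : Fin n) :
    permEquiv n ν q j = q (ν j) := by
  have := MeasurableEquiv.piCongrLeft_apply_apply (β := fun _ : Fin n => ℝ) ν.symm q (ν j)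
  simpa [permEquiv] using this

theorem measurePreserving_permEquiv (n : ℕ) (ν : Equiv.Perm (Fin n)) :
    MeasurePreserving (permEquiv n ν) volume volume :=
  volume_measurePreserving_piCongrLeft _ ν.symm

theorem continuous_permEquiv (n : ℕ) (ν : Equiv.Perm (Fin n)) :
    Continuous (permEquiv n ν) := by
  have : ⇑(permEquiv n ν) = fun q : Fin n → ℝ => fun j => q (ν j) := by
    funext q j; exact permEquiv_apply n ν q j
  rw [this]
  exact continuous_pi fun j => continuous_apply (ν j)

theorem lemA {d n : ℕ} (X : Fin d → ℝ × ℝ → ℝ) (hX : ∀ j, Continuous (d12 (X j)))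
    (a b c e : ℝ) (w : Fin n → Fin d) :
    sigSym X a c b e w =
      ∫ p in (simplex a b n) ×ˢ (Set.pi Set.univ fun _ : Fin n => Set.Icc c e),
        ∏ i, d12 (X (w i)) (p.1 i, p.2 i) := by
  classical
  set f : Fin n → ℝ × ℝ → ℝ := fun i => d12 (X (w i)) with hf
  set Δ1 := simplex a b n
  set Δ2 := simplex c e n
  set cube := Set.pi Set.univ fun _ : Fin n => Set.Icc c e with hcube
  set F : (Fin n → ℝ) × (Fin n → ℝ) → ℝ := fun p => ∏ i, f i (p.1 i, p.2 i) with hF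
  have hFcont : Continuous F := by
    refine continuous_finset_prod _ fun i _ => ?_
    exact (hX (w i)).comp
      (((continuous_apply i).comp continuous_fst).prodMk
        ((continuous_apply i).comp continuous_snd))
  set S : Equiv.Perm (Fin n) → Set (Fin n → ℝ) := fun ν => (permEquiv n ν) '' Δ2 with hS
  set T : Equiv.Perm (Fin n) → Set ((Fin n → ℝ) × (Fin n → ℝ)) := fun ν => Δ1 ×ˢ S ν with hT
  -- membership characterization of S ν
  have hSmem : ∀ ν (y : Fin n → ℝ), y ∈ S ν ↔ (fun j => y (ν.symm j)) ∈ Δ2 := by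
    intro ν y
    constructor
    · rintro ⟨q, hq, rfl⟩
      have : (fun j => permEquiv n ν q (ν.symm j)) = q := by
        funext j; rw [permEquiv_apply]; simp
      rwa [this]
    · intro h
      refine ⟨fun j => y (ν.symm j), h, ?_⟩
      funext j; rw [permEquiv_apply]; simp
  -- each S ν is compact
  have hScompact : ∀ ν, IsCompact (S ν) := fun ν =>
    (isCompact_simplex c e n).image (continuous_permEquiv n ν)
  -- Step 1 : sigFull = integral over T ν
  have step1 : ∀ ν : Equiv.Perm (Fin n),
      sigFull X a c b e w ν = ∫ p in T ν, F p := by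
    intro ν
    have hmp : MeasurePreserving
        (MeasurableEquiv.prodCongr (MeasurableEquiv.refl (Fin n → ℝ)) (permEquiv n ν))
        volume volume := by
      rw [Measure.volume_eq_prod ((Fin n → ℝ)) ((Fin n → ℝ))]
      exact (MeasurePreserving.id volume).prod (measurePreserving_permEquiv n ν)
    have hemb := (MeasurableEquiv.prodCongr (MeasurableEquiv.refl (Fin n → ℝ))
        (permEquiv n ν)).measurableEmbedding
    have himg : (MeasurableEquiv.prodCongr (MeasurableEquiv.refl (Fin n → ℝ))
        (permEquiv n ν)) '' (Δ1 ×ˢ Δ2) = T ν := by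
      rw [hT]
      ext p
      constructor
      · rintro ⟨q, ⟨hq1, hq2⟩, rfl⟩
        exact ⟨hq1, ⟨q.2, hq2, rfl⟩⟩
      · rintro ⟨hp1, q2, hq2, hq2e⟩
        exact ⟨(p.1, q2), ⟨hp1, hq2⟩, by simp [MeasurableEquiv.prodCongr, hq2e]⟩
    have key := hmp.setIntegral_image_emb hemb F (Δ1 ×ˢ Δ2)
    rw [himg] at key
    rw [key]
    have hset : simplex2 a b c e n = Δ1 ×ˢ Δ2 := Set.ext fun p => Iff.rfl
    unfold sigFull
    rw [hset]
    refine setIntegral_congr_fun ((measurableSet_simplex a b n).prod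
      (measurableSet_simplex c e n)) fun p _ => ?_
    simp only [hF, MeasurableEquiv.prodCongr, MeasurableEquiv.refl]
    refine Finset.prod_congr rfl fun i _ => ?_
    congr 1
    simp [permEquiv_apply]
  -- Step 2 : the union of the T ν is Δ1 ×ˢ cube
  have hScube : ∀ ν, S ν ⊆ cube := by
    intro ν y hy
    rw [hSmem] at hy
    intro j _
    have h := hy.1 (ν j)
    simp only [Equiv.symm_apply_apply] at h
    exact ⟨h.1, h.2⟩
  have hcover : cube ⊆ ⋃ ν : Equiv.Perm (Fin n), S ν := by
    intro y hy
    refine Set.mem_iUnion.2 ⟨(Tuple.sort y)⁻¹, ?_⟩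
    rw [hSmem]
    constructor
    · intro i
      have := hy (((Tuple.sort y)⁻¹).symm i) (Set.mem_univ _)
      simpa using this
    · intro i j hij
      have hmono := Tuple.monotone_sort y
      have : ((Tuple.sort y)⁻¹ : Equiv.Perm (Fin n)).symm = Tuple.sort y := rfl
      rw [this]
      exact hmono hij
  have hunion : (⋃ ν : Equiv.Perm (Fin n), T ν) = Δ1 ×ˢ cube := by
    rw [hT]
    simp only
    rw [← Set.prod_iUnion]
    congr 1
    exact le_antisymm (Set.iUnion_subset hScube) hcover
  -- Step 3 : a.e. disjointness
  have hdisj : Pairwise (Function.onFun (AEDisjoint volume) T) := by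
    intro ν μ hνμ
    have hsub : T ν ∩ T μ ⊆
        (Set.univ : Set (Fin n → ℝ)) ×ˢ {y : Fin n → ℝ | ¬ Function.Injective y} := by
      rintro ⟨x, y⟩ ⟨⟨-, hy1⟩, ⟨-, hy2⟩⟩
      refine ⟨Set.mem_univ _, fun hinj => ?_⟩
      rw [hSmem] at hy1 hy2
      have h1 : Monotone fun j => y (ν.symm j) := fun i j hij => hy1.2 i j hij
      have h2 : Monotone fun j => y (μ.symm j) := fun i j hij => hy2.2 i j hij
      have := Tuple.unique_monotone (f := y) (σ := ν.symm) (τ := μ.symm) h1 h2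
      have hperm : (ν.symm : Fin n → Fin n) = μ.symm := by
        funext i
        exact hinj (congrFun this i)
      apply hνμ
      have : ν.symm = μ.symm := Equiv.ext fun i => congrFun hperm i
      calc ν = ν.symm.symm := rfl
        _ = μ.symm.symm := by rw [this]
        _ = μ := rfl
    refine measure_mono_null hsub ?_
    rw [Measure.volume_eq_prod, Measure.prod_prod, notInjective_null n, mul_zero]
  -- assembly
  have hm : ∀ ν : Equiv.Perm (Fin n), NullMeasurableSet (T ν) volume := fun ν =>
    ((measurableSet_simplex a b n).prod (hScompact ν).measurableSet).nullMeasurableSet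
  have hfi : IntegrableOn F (⋃ ν : Equiv.Perm (Fin n), T ν) volume := by
    rw [hunion]
    exact hFcont.continuousOn.integrableOn_compact
      ((isCompact_simplex a b n).prod (isCompact_univ_pi fun _ => isCompact_Icc))
  calc sigSym X a c b e w = ∑ ν : Equiv.Perm (Fin n), ∫ p in T ν, F p :=
        Finset.sum_congr rfl fun ν _ => step1 ν
    _ = ∑' ν : Equiv.Perm (Fin n), ∫ p in T ν, F p := (tsum_fintype _).symm
    _ = ∫ p in ⋃ ν : Equiv.Perm (Fin n), T ν, F p := (integral_iUnion_ae hm hdisj hfi).symm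
    _ = ∫ p in Δ1 ×ˢ cube, F p := by rw [hunion]

/-! ### join equivalence -/

def sigmaEquiv {km mm nn : ℕ} (h : km + mm = nn) : Fin km ⊕ Fin mm ≃ Fin nn :=
  finSumFinEquiv.trans (finCongr h)

theorem sigmaEquiv_inl {km mm nn : ℕ} (h : km + mm = nn) (i : Fin km) :
    sigmaEquiv h (Sum.inl i) = ⟨(i : ℕ), by omega⟩ := by
  apply Fin.ext
  simp [sigmaEquiv]

theorem sigmaEquiv_inr {km mm nn : ℕ} (h : km + mm = nn) (j : Fin mm) :
    sigmaEquiv h (Sum.inr j) = ⟨km + (j : ℕ), by omega⟩ := by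
  apply Fin.ext
  simp [sigmaEquiv]

noncomputable def joinEquiv {km mm nn : ℕ} (h : km + mm = nn) :
    ((Fin km → ℝ) × (Fin mm → ℝ)) ≃ᵐ (Fin nn → ℝ) :=
  (MeasurableEquiv.sumPiEquivProdPi (fun _ : Fin km ⊕ Fin mm => ℝ)).symm.trans
    (MeasurableEquiv.piCongrLeft (fun _ : Fin nn => ℝ) (sigmaEquiv h))

theorem joinEquiv_inl {km mm nn : ℕ} (h : km + mm = nn) (p : Fin km → ℝ) (q : Fin mm → ℝ)
    (i : Fin km) : joinEquiv h (p, q) (sigmaEquiv h (Sum.inl i)) = p i := by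
  have h1 := MeasurableEquiv.piCongrLeft_apply_apply (β := fun _ : Fin nn => ℝ)
    (sigmaEquiv h) ((MeasurableEquiv.sumPiEquivProdPi (fun _ : Fin km ⊕ Fin mm => ℝ)).symm (p, q))
    (Sum.inl i)
  simpa [joinEquiv, MeasurableEquiv.trans_apply, MeasurableEquiv.coe_sumPiEquivProdPi_symm,
    Equiv.sumPiEquivProdPi_symm_apply] using h1

theorem joinEquiv_inr {km mm nn : ℕ} (h : km + mm = nn) (p : Fin km → ℝ) (q : Fin mm → ℝ)
    (j : Fin mm) : joinEquiv h (p, q) (sigmaEquiv h (Sum.inr j)) = q j := by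
  have h1 := MeasurableEquiv.piCongrLeft_apply_apply (β := fun _ : Fin nn => ℝ)
    (sigmaEquiv h) ((MeasurableEquiv.sumPiEquivProdPi (fun _ : Fin km ⊕ Fin mm => ℝ)).symm (p, q))
    (Sum.inr j)
  simpa [joinEquiv, MeasurableEquiv.trans_apply, MeasurableEquiv.coe_sumPiEquivProdPi_symm,
    Equiv.sumPiEquivProdPi_symm_apply] using h1

theorem measurePreserving_joinEquiv {km mm nn : ℕ} (h : km + mm = nn) :
    MeasurePreserving (joinEquiv h) volume volume := by
  have h1 := MeasureTheory.volume_measurePreserving_sumPiEquivProdPi_symm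
    (fun _ : Fin km ⊕ Fin mm => ℝ)
  have h2 := MeasureTheory.volume_measurePreserving_piCongrLeft
    (fun _ : Fin nn => ℝ) (sigmaEquiv h)
  exact h2.comp h1

theorem continuous_joinEquiv {km mm nn : ℕ} (h : km + mm = nn) :
    Continuous (joinEquiv h) := by
  refine continuous_pi fun i => ?_
  obtain ⟨x, rfl⟩ := (sigmaEquiv h).surjective i
  cases x with
  | inl i' =>
    have : (fun z : (Fin km → ℝ) × (Fin mm → ℝ) => joinEquiv h z (sigmaEquiv h (Sum.inl i')))
        = fun z => z.1 i' := by
      funext z; exact joinEquiv_inl h z.1 z.2 i'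
    rw [this]; exact (continuous_apply i').comp continuous_fst
  | inr j' =>
    have : (fun z : (Fin km → ℝ) × (Fin mm → ℝ) => joinEquiv h z (sigmaEquiv h (Sum.inr j')))
        = fun z => z.2 j' := by
      funext z; exact joinEquiv_inr h z.1 z.2 j'
    rw [this]; exact (continuous_apply j').comp continuous_snd

/-! ### the pieces of the simplex -/

def Aset (a u b : ℝ) (n kk : ℕ) : Set (Fin n → ℝ) :=
  {r | r ∈ simplex a b n ∧ ∀ i : Fin n, ((i : ℕ) < kk → r i ≤ u) ∧ (kk ≤ (i : ℕ) → u ≤ r i)}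

theorem Aset_subset (a u b : ℝ) (n kk : ℕ) : Aset a u b n kk ⊆ simplex a b n := fun _ hr => hr.1

theorem isCompact_Aset (a u b : ℝ) (n kk : ℕ) : IsCompact (Aset a u b n kk) := by
  refine (isCompact_simplex a b n).of_isClosed_subset ?_ (Aset_subset a u b n kk)
  have : Aset a u b n kk = simplex a b n ∩
      ⋂ i : Fin n, ({r : Fin n → ℝ | (i : ℕ) < kk → r i ≤ u} ∩
        {r : Fin n → ℝ | kk ≤ (i : ℕ) → u ≤ r i}) := by
    ext r
    simp only [Aset, Set.mem_setOf_eq, Set.mem_inter_iff, Set.mem_iInter]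
  rw [this]
  refine (isCompact_simplex a b n).isClosed.inter (isClosed_iInter fun i => IsClosed.inter ?_ ?_)
  · by_cases hik : (i : ℕ) < kk
    · have : {r : Fin n → ℝ | (i : ℕ) < kk → r i ≤ u} = {r : Fin n → ℝ | r i ≤ u} := by
        ext r; simp [hik]
      rw [this]; exact isClosed_le (continuous_apply i) continuous_const
    · have : {r : Fin n → ℝ | (i : ℕ) < kk → r i ≤ u} = Set.univ := by ext r; simp [hik]
      rw [this]; exact isClosed_univ
  · by_cases hik : kk ≤ (i : ℕ)
    · have : {r : Fin n → ℝ | kk ≤ (i : ℕ) → u ≤ r i} = {r : Fin n → ℝ | u ≤ r i} := by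
        ext r; simp [hik]
      rw [this]; exact isClosed_le continuous_const (continuous_apply i)
    · have : {r : Fin n → ℝ | kk ≤ (i : ℕ) → u ≤ r i} = Set.univ := by ext r; simp [hik]
      rw [this]; exact isClosed_univ

theorem simplex_eq_iUnion_Aset (a u b : ℝ) (n : ℕ) :
    simplex a b n = ⋃ k : Fin (n + 1), Aset a u b n (k : ℕ) := by
  classical
  apply le_antisymm
  · intro r hr
    set S : Finset (Fin n) := Finset.univ.filter (fun i => r i < u) with hSdef
    have hdown : ∀ i ∈ S, ∀ j : Fin n, j ≤ i → j ∈ S := by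
      intro i hi j hji
      simp only [hSdef, Finset.mem_filter, Finset.mem_univ, true_and] at hi ⊢
      exact lt_of_le_of_lt (hr.2 j i hji) hi
    have hcard : S.card ≤ n := le_trans (Finset.card_filter_le _ _) (by simp)
    have hkey : ∀ i : Fin n, i ∈ S ↔ (i : ℕ) < S.card := by
      intro i
      constructor
      · intro hi
        have hsub : Finset.Iic i ⊆ S := fun j hj => hdown i hi j (Finset.mem_Iic.mp hj)
        have := Finset.card_le_card hsub
        rw [Fin.card_Iic] at this
        omega
      · intro hlt
        by_contra hni
        have hsub : S ⊆ Finset.Iio i := by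
          intro j hj
          rw [Finset.mem_Iio]
          by_contra hij
          exact hni (hdown j hj i (le_of_not_gt hij))
        have := Finset.card_le_card hsub
        rw [Fin.card_Iio] at this
        omega
    refine Set.mem_iUnion.2 ⟨⟨S.card, by omega⟩, hr, fun i => ⟨fun hik => ?_, fun hik => ?_⟩⟩
    · have hik' : (i : ℕ) < S.card := hik
      have : i ∈ S := (hkey i).2 hik'
      simp only [hSdef, Finset.mem_filter, Finset.mem_univ, true_and] at this
      exact le_of_lt this
    · have hik' : S.card ≤ (i : ℕ) := hik
      have : i ∉ S := fun hi => by have := (hkey i).1 hi; omega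
      simp only [hSdef, Finset.mem_filter, Finset.mem_univ, true_and] at this
      exact le_of_not_gt this
  · exact Set.iUnion_subset fun k => Aset_subset a u b n _

theorem coord_null (n : ℕ) (i : Fin n) (c : ℝ) : volume {y : Fin n → ℝ | y i = c} = 0 := by
  have h1 : ((Pi.single i c : Fin n → ℝ) + ·) ⁻¹' {y : Fin n → ℝ | y i = c}
      = {y : Fin n → ℝ | y i = 0} := by
    ext y
    simp [Pi.single_eq_same]
  have h2 := measure_preimage_add (volume : Measure (Fin n → ℝ)) (Pi.single i c)
    {y : Fin n → ℝ | y i = c}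
  rw [h1] at h2
  rw [← h2]
  have hsub : {y : Fin n → ℝ | y i = 0} ⊆
      (LinearMap.ker (LinearMap.proj i : (Fin n → ℝ) →ₗ[ℝ] ℝ) : Submodule ℝ (Fin n → ℝ)) :=
    fun y hy => hy
  refine measure_mono_null hsub (Measure.addHaar_submodule _ _ ?_)
  intro h
  have hmem : Pi.single i (1 : ℝ) ∈ LinearMap.ker (LinearMap.proj i : (Fin n → ℝ) →ₗ[ℝ] ℝ) := by
    rw [h]; trivial
  simp [LinearMap.mem_ker, Pi.single_eq_same] at hmem

theorem Aset_inter_null (a u b : ℝ) (n : ℕ) (k l : Fin (n + 1)) (hkl : k ≠ l) :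
    volume (Aset a u b n (k : ℕ) ∩ Aset a u b n (l : ℕ)) = 0 := by
  wlog hlt : (k : ℕ) < (l : ℕ) generalizing k l
  · rw [Set.inter_comm]
    refine this l k hkl.symm ?_
    have : (k : ℕ) ≠ (l : ℕ) := fun h => hkl (Fin.ext h)
    omega
  have hkn : (k : ℕ) < n := by have := l.isLt; omega
  refine measure_mono_null (fun r hr => ?_) (coord_null n ⟨(k : ℕ), hkn⟩ u)
  have h1 := (hr.1.2 ⟨(k : ℕ), hkn⟩).2 (le_refl _)
  have h2 := (hr.2.2 ⟨(k : ℕ), hkn⟩).1 hlt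
  exact le_antisymm h2 h1

theorem join_mem_cube {km mm nn : ℕ} (h : km + mm = nn) (c e : ℝ)
    (p : Fin km → ℝ) (q : Fin mm → ℝ) :
    joinEquiv h (p, q) ∈ (Set.pi Set.univ fun _ : Fin nn => Set.Icc c e) ↔
      p ∈ (Set.pi Set.univ fun _ : Fin km => Set.Icc c e) ∧
      q ∈ (Set.pi Set.univ fun _ : Fin mm => Set.Icc c e) := by
  constructor
  · intro hj
    refine ⟨fun i _ => ?_, fun j _ => ?_⟩
    · have := hj (sigmaEquiv h (Sum.inl i)) (Set.mem_univ _)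
      rwa [joinEquiv_inl] at this
    · have := hj (sigmaEquiv h (Sum.inr j)) (Set.mem_univ _)
      rwa [joinEquiv_inr] at this
  · rintro ⟨hp, hq⟩ i _
    obtain ⟨x, rfl⟩ := (sigmaEquiv h).surjective i
    cases x with
    | inl i' => rw [joinEquiv_inl]; exact hp i' (Set.mem_univ _)
    | inr j' => rw [joinEquiv_inr]; exact hq j' (Set.mem_univ _)

theorem join_mem_Aset {km mm nn : ℕ} (h : km + mm = nn) (a u b : ℝ) (hau : a ≤ u) (hub : u ≤ b)
    (p : Fin km → ℝ) (q : Fin mm → ℝ) :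
    joinEquiv h (p, q) ∈ Aset a u b nn km ↔ p ∈ simplex a u km ∧ q ∈ simplex u b mm := by
  constructor
  · rintro ⟨hsim, hcond⟩
    refine ⟨⟨fun i => ?_, fun i i' hii' => ?_⟩, ⟨fun j => ?_, fun j j' hjj' => ?_⟩⟩
    · have h1 := hsim.1 (sigmaEquiv h (Sum.inl i))
      rw [joinEquiv_inl] at h1
      have h2 := (hcond (sigmaEquiv h (Sum.inl i))).1
      rw [joinEquiv_inl, sigmaEquiv_inl] at h2
      exact ⟨h1.1, h2 i.isLt⟩
    · have := hsim.2 (sigmaEquiv h (Sum.inl i)) (sigmaEquiv h (Sum.inl i')) ?_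
      · rwa [joinEquiv_inl, joinEquiv_inl] at this
      · rw [sigmaEquiv_inl, sigmaEquiv_inl]
        exact hii'
    · have h1 := hsim.1 (sigmaEquiv h (Sum.inr j))
      rw [joinEquiv_inr] at h1
      have h2 := (hcond (sigmaEquiv h (Sum.inr j))).2
      rw [joinEquiv_inr, sigmaEquiv_inr] at h2
      exact ⟨h2 (Nat.le_add_right _ _), h1.2⟩
    · have := hsim.2 (sigmaEquiv h (Sum.inr j)) (sigmaEquiv h (Sum.inr j')) ?_
      · rwa [joinEquiv_inr, joinEquiv_inr] at this
      · rw [sigmaEquiv_inr, sigmaEquiv_inr]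
        simp only [Fin.mk_le_mk]
        have : (j : ℕ) ≤ (j' : ℕ) := hjj'
        omega
  · rintro ⟨hp, hq⟩
    have hbound : ∀ i : Fin nn, a ≤ joinEquiv h (p, q) i ∧ joinEquiv h (p, q) i ≤ b := by
      intro i
      obtain ⟨x, rfl⟩ := (sigmaEquiv h).surjective i
      cases x with
      | inl i' =>
        rw [joinEquiv_inl]
        exact ⟨(hp.1 i').1, le_trans (hp.1 i').2 hub⟩
      | inr j' =>
        rw [joinEquiv_inr]
        exact ⟨le_trans hau (hq.1 j').1, (hq.1 j').2⟩
    refine ⟨⟨hbound, fun i i' hii' => ?_⟩, fun i => ⟨fun hik => ?_, fun hik => ?_⟩⟩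
    · obtain ⟨x, rfl⟩ := (sigmaEquiv h).surjective i
      obtain ⟨x', rfl⟩ := (sigmaEquiv h).surjective i'
      cases x with
      | inl i1 =>
        cases x' with
        | inl i2 =>
          rw [joinEquiv_inl, joinEquiv_inl]
          refine hp.2 i1 i2 ?_
          rw [sigmaEquiv_inl, sigmaEquiv_inl] at hii'
          exact hii'
        | inr j2 =>
          rw [joinEquiv_inl, joinEquiv_inr]
          exact le_trans (hp.1 i1).2 (hq.1 j2).1
      | inr j1 =>
        cases x' with
        | inl i2 =>
          rw [sigmaEquiv_inr, sigmaEquiv_inl] at hii'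
          simp only [Fin.mk_le_mk] at hii'
          have := i2.isLt
          omega
        | inr j2 =>
          rw [joinEquiv_inr, joinEquiv_inr]
          refine hq.2 j1 j2 ?_
          rw [sigmaEquiv_inr, sigmaEquiv_inr] at hii'
          simp only [Fin.mk_le_mk] at hii'
          exact Nat.le_of_add_le_add_left hii'
    · obtain ⟨x, rfl⟩ := (sigmaEquiv h).surjective i
      cases x with
      | inl i1 => rw [joinEquiv_inl]; exact (hp.1 i1).2
      | inr j1 =>
        rw [sigmaEquiv_inr] at hik
        simp only at hik
        omega
    · obtain ⟨x, rfl⟩ := (sigmaEquiv h).surjective i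
      cases x with
      | inl i1 =>
        rw [sigmaEquiv_inl] at hik
        simp only at hik
        have := i1.isLt
        omega
      | inr j1 => rw [joinEquiv_inr]; exact (hq.1 j1).1

/-! ### Lemma B: 1D Chen relation for product-set integrals -/

theorem lemB {n : ℕ} (f : Fin n → ℝ × ℝ → ℝ) (hf : ∀ i, Continuous (f i))
    (a u b c e : ℝ) (hau : a ≤ u) (hub : u ≤ b) :
    (∫ p in (simplex a b n) ×ˢ (Set.pi Set.univ fun _ : Fin n => Set.Icc c e),
        ∏ i, f i (p.1 i, p.2 i)) =
      ∑ k : Fin (n + 1),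
        (∫ p in (simplex a u (k : ℕ)) ×ˢ (Set.pi Set.univ fun _ : Fin (k : ℕ) => Set.Icc c e),
            ∏ i, f (Fin.castLE (Nat.lt_succ_iff.mp k.isLt) i) (p.1 i, p.2 i)) *
        (∫ p in (simplex u b (n - (k : ℕ))) ×ˢ
            (Set.pi Set.univ fun _ : Fin (n - (k : ℕ)) => Set.Icc c e),
            ∏ j : Fin (n - (k : ℕ)), f ⟨(k : ℕ) + (j : ℕ), lt_of_lt_of_le (Nat.add_lt_add_left j.isLt _) (by have := k.isLt; omega)⟩
              (p.1 j, p.2 j)) := by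
  classical
  set cube : Set (Fin n → ℝ) := Set.pi Set.univ fun _ : Fin n => Set.Icc c e with hcube
  set F : (Fin n → ℝ) × (Fin n → ℝ) → ℝ := fun p => ∏ i, f i (p.1 i, p.2 i) with hF
  have hFcont : Continuous F := by
    refine continuous_finset_prod _ fun i _ => ?_
    exact (hf i).comp
      (((continuous_apply i).comp continuous_fst).prodMk
        ((continuous_apply i).comp continuous_snd))
  have hcubeC : IsCompact cube := isCompact_univ_pi fun _ => isCompact_Icc
  have hcubeM : MeasurableSet cube := hcubeC.isClosed.measurableSet
  -- step 1: decompose the integral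
  have step1 : (∫ p in (simplex a b n) ×ˢ cube, F p)
      = ∑ k : Fin (n + 1), ∫ p in (Aset a u b n (k : ℕ)) ×ˢ cube, F p := by
    have hdecomp : (simplex a b n) ×ˢ cube
        = ⋃ k : Fin (n + 1), (Aset a u b n (k : ℕ)) ×ˢ cube := by
      rw [simplex_eq_iUnion_Aset a u b n, Set.iUnion_prod_const]
    rw [hdecomp]
    have hm : ∀ k : Fin (n + 1), NullMeasurableSet ((Aset a u b n (k : ℕ)) ×ˢ cube) volume :=
      fun k => (((isCompact_Aset a u b n (k : ℕ)).measurableSet).prod hcubeM).nullMeasurableSet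
    have hd : Pairwise (Function.onFun (AEDisjoint volume) fun k : Fin (n + 1) =>
        (Aset a u b n (k : ℕ)) ×ˢ cube) := by
      intro k l hkl
      have hsub : ((Aset a u b n (k : ℕ)) ×ˢ cube) ∩ ((Aset a u b n (l : ℕ)) ×ˢ cube)
          ⊆ ((Aset a u b n (k : ℕ)) ∩ (Aset a u b n (l : ℕ))) ×ˢ (Set.univ : Set (Fin n → ℝ)) :=
        fun p hp => ⟨⟨hp.1.1, hp.2.1⟩, Set.mem_univ _⟩
      refine measure_mono_null hsub ?_
      rw [Measure.volume_eq_prod, Measure.prod_prod, Aset_inter_null a u b n k l hkl, zero_mul]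
    have hfi : IntegrableOn F (⋃ k : Fin (n + 1), (Aset a u b n (k : ℕ)) ×ˢ cube) volume := by
      rw [← hdecomp]
      exact hFcont.continuousOn.integrableOn_compact ((isCompact_simplex a b n).prod hcubeC)
    rw [integral_iUnion_ae hm hd hfi, tsum_fintype]
  rw [step1]
  -- step 2: evaluate each piece
  refine Finset.sum_congr rfl fun k _ => ?_
  have hkn : (k : ℕ) ≤ n := Nat.lt_succ_iff.mp k.isLt
  have hsum : (k : ℕ) + (n - (k : ℕ)) = n := by omega
  set Θ := MeasurableEquiv.prodCongr (joinEquiv hsum) (joinEquiv hsum) with hΘ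
  have hmp : MeasurePreserving Θ volume volume := by
    rw [Measure.volume_eq_prod ((Fin (k : ℕ) → ℝ) × (Fin (n - (k : ℕ)) → ℝ))
      ((Fin (k : ℕ) → ℝ) × (Fin (n - (k : ℕ)) → ℝ)),
      Measure.volume_eq_prod (Fin n → ℝ) (Fin n → ℝ)]
    exact (measurePreserving_joinEquiv hsum).prod (measurePreserving_joinEquiv hsum)
  set C1 : Set (Fin (k : ℕ) → ℝ) := Set.pi Set.univ fun _ => Set.Icc c e with hC1
  set C2 : Set (Fin (n - (k : ℕ)) → ℝ) := Set.pi Set.univ fun _ => Set.Icc c e with hC2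
  have hpre : Θ ⁻¹' ((Aset a u b n (k : ℕ)) ×ˢ cube)
      = ((simplex a u (k : ℕ)) ×ˢ (simplex u b (n - (k : ℕ)))) ×ˢ (C1 ×ˢ C2) := by
    ext z
    obtain ⟨⟨p₁, q₁⟩, ⟨p₂, q₂⟩⟩ := z
    have happ : Θ ((p₁, q₁), (p₂, q₂)) = (joinEquiv hsum (p₁, q₁), joinEquiv hsum (p₂, q₂)) := rfl
    simp only [Set.mem_preimage, happ, Set.mem_prod]
    rw [join_mem_Aset hsum a u b hau hub, join_mem_cube hsum]
  have key := hmp.setIntegral_preimage_emb Θ.measurableEmbedding F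
    ((Aset a u b n (k : ℕ)) ×ˢ cube)
  rw [hpre] at key
  rw [← key]
  -- the two factor functions
  set F1 : (Fin (k : ℕ) → ℝ) × (Fin (k : ℕ) → ℝ) → ℝ :=
    fun y => ∏ i, f (Fin.castLE (Nat.lt_succ_iff.mp k.isLt) i) (y.1 i, y.2 i) with hF1
  set F2 : (Fin (n - (k : ℕ)) → ℝ) × (Fin (n - (k : ℕ)) → ℝ) → ℝ :=
    fun y => ∏ j : Fin (n - (k : ℕ)), f ⟨(k : ℕ) + (j : ℕ), lt_of_lt_of_le (Nat.add_lt_add_left j.isLt _) (by have := k.isLt; omega)⟩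
      (y.1 j, y.2 j) with hF2
  have hF1cont : Continuous F1 := by
    refine continuous_finset_prod _ fun i _ => ?_
    exact (hf _).comp
      (((continuous_apply i).comp continuous_fst).prodMk
        ((continuous_apply i).comp continuous_snd))
  have hF2cont : Continuous F2 := by
    refine continuous_finset_prod _ fun i _ => ?_
    exact (hf _).comp
      (((continuous_apply i).comp continuous_fst).prodMk
        ((continuous_apply i).comp continuous_snd))
  have hsplit : ∀ z : ((Fin (k : ℕ) → ℝ) × (Fin (n - (k : ℕ)) → ℝ)) ×
      ((Fin (k : ℕ) → ℝ) × (Fin (n - (k : ℕ)) → ℝ)),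
      F (Θ z) = F1 (z.1.1, z.2.1) * F2 (z.1.2, z.2.2) := by
    rintro ⟨⟨p₁, q₁⟩, ⟨p₂, q₂⟩⟩
    have happ : Θ ((p₁, q₁), (p₂, q₂)) = (joinEquiv hsum (p₁, q₁), joinEquiv hsum (p₂, q₂)) := rfl
    rw [hF, happ]
    simp only
    rw [← Equiv.prod_comp (sigmaEquiv hsum)
      (fun i => f i (joinEquiv hsum (p₁, q₁) i, joinEquiv hsum (p₂, q₂) i)),
      Fintype.prod_sum_type]
    congr 1
    · refine Finset.prod_congr rfl fun i _ => ?_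
      rw [joinEquiv_inl, joinEquiv_inl, sigmaEquiv_inl]
      rfl
    · refine Finset.prod_congr rfl fun j _ => ?_
      rw [joinEquiv_inr, joinEquiv_inr, sigmaEquiv_inr]
  have hmeas : MeasurableSet (((simplex a u (k : ℕ)) ×ˢ (simplex u b (n - (k : ℕ))))
      ×ˢ (C1 ×ˢ C2)) := by
    exact (((measurableSet_simplex _ _ _).prod (measurableSet_simplex _ _ _)).prod
      ((isCompact_univ_pi fun _ => isCompact_Icc).measurableSet.prod
        (isCompact_univ_pi fun _ => isCompact_Icc).measurableSet))
  rw [setIntegral_congr_fun hmeas (fun z _ => hsplit z)]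
  -- now Fubini / factorization
  haveI hfmc : IsFiniteMeasureOnCompacts
      (volume : Measure ((Fin (k : ℕ) → ℝ) × (Fin (n - (k : ℕ)) → ℝ))) := inferInstance
  have hfi2 : IntegrableOn (fun z : ((Fin (k : ℕ) → ℝ) × (Fin (n - (k : ℕ)) → ℝ)) ×
      ((Fin (k : ℕ) → ℝ) × (Fin (n - (k : ℕ)) → ℝ)) => F1 (z.1.1, z.2.1) * F2 (z.1.2, z.2.2))
      (((simplex a u (k : ℕ)) ×ˢ (simplex u b (n - (k : ℕ)))) ×ˢ (C1 ×ˢ C2)) volume := by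
    refine ContinuousOn.integrableOn_compact ?_ ?_
    · exact (((isCompact_simplex _ _ _).prod (isCompact_simplex _ _ _)).prod
        ((isCompact_univ_pi fun _ => isCompact_Icc).prod
          (isCompact_univ_pi fun _ => isCompact_Icc)))
    · exact ((hF1cont.comp ((continuous_fst.fst).prodMk (continuous_snd.fst))).mul
        (hF2cont.comp ((continuous_fst.snd).prodMk (continuous_snd.snd)))).continuousOn
  rw [Measure.volume_eq_prod] at hfi2 ⊢
  rw [setIntegral_prod _ hfi2]
  have hinner : ∀ P ∈ (simplex a u (k : ℕ)) ×ˢ (simplex u b (n - (k : ℕ))),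
      (∫ Q in C1 ×ˢ C2, F1 (P.1, Q.1) * F2 (P.2, Q.2) ∂(volume : Measure _))
        = (∫ y in C1, F1 (P.1, y)) * ∫ y in C2, F2 (P.2, y) := by
    intro P _
    rw [Measure.volume_eq_prod]
    exact setIntegral_prod_mul (fun y => F1 (P.1, y)) (fun y => F2 (P.2, y)) C1 C2
  rw [setIntegral_congr_fun ((measurableSet_simplex _ _ _).prod (measurableSet_simplex _ _ _))
    hinner]
  rw [Measure.volume_eq_prod (Fin (k : ℕ) → ℝ) (Fin (n - (k : ℕ)) → ℝ)]
  rw [setIntegral_prod_mul (fun x => ∫ y in C1, F1 (x, y)) (fun x => ∫ y in C2, F2 (x, y))]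
  -- identify with the iterated forms of the two factors
  have hfac1 : (∫ p in (simplex a u (k : ℕ)) ×ˢ C1, F1 p)
      = ∫ x in simplex a u (k : ℕ), ∫ y in C1, F1 (x, y) := by
    rw [Measure.volume_eq_prod]
    refine setIntegral_prod _ ?_
    exact hF1cont.continuousOn.integrableOn_compact
      ((isCompact_simplex _ _ _).prod (isCompact_univ_pi fun _ => isCompact_Icc))
  have hfac2 : (∫ p in (simplex u b (n - (k : ℕ))) ×ˢ C2, F2 p)
      = ∫ x in simplex u b (n - (k : ℕ)), ∫ y in C2, F2 (x, y) := by
    rw [Measure.volume_eq_prod]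
    refine setIntegral_prod _ ?_
    exact hF2cont.continuousOn.integrableOn_compact
      ((isCompact_simplex _ _ _).prod (isCompact_univ_pi fun _ => isCompact_Icc))
  rw [← hfac1, ← hfac2]

/-- Chen's relation for the symmetrized 2D signature in the first
(horizontal) direction: for `s₁ ≤ u₁ ≤ t₁`,
`⟨S^Sym_{s,t}, w⟩ = ∑_{k=0}^n ⟨S^Sym_{(s₁,s₂),(u₁,t₂)}, w₁⋯w_k⟩ ⟨S^Sym_{(u₁,s₂),(t₁,t₂)}, w_{k+1}⋯w_n⟩`,
with empty-word coefficients equal to 1. -/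
theorem stmt14 {d : ℕ} (T : ℝ) (X : Fin d → ℝ × ℝ → ℝ) (hX : ∀ i, ContDiff ℝ 2 (X i))
    {n : ℕ} (w : Fin n → Fin d)
    (s1 s2 u1 t1 t2 : ℝ) (hs1 : 0 ≤ s1) (hsu : s1 ≤ u1) (hut : u1 ≤ t1) (ht1 : t1 ≤ T)
    (hs2 : 0 ≤ s2) (h2 : s2 ≤ t2) (ht2 : t2 ≤ T) :
    sigSym X s1 s2 t1 t2 w =
      ∑ k : Fin (n + 1),
        sigSym X s1 s2 u1 t2
            (fun i : Fin (k : ℕ) => w (Fin.castLE (Nat.lt_succ_iff.mp k.isLt) i)) *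
        sigSym X u1 s2 t1 t2
            (fun j : Fin (n - (k : ℕ)) =>
              w ⟨(k : ℕ) + (j : ℕ), by have := j.isLt; have := k.isLt; omega⟩) := by
  
  have hX' : ∀ j, Continuous (d12 (X j)) := fun j => continuous_d12 _ (hX j)
  rw [lemA X hX' s1 t1 s2 t2 w]
  rw [lemB (fun i => d12 (X (w i))) (fun i => hX' (w i)) s1 u1 t1 s2 t2 hsu hut]
  refine Finset.sum_congr rfl fun k _ => ?_
  rw [lemA X hX' s1 u1 s2 t2 (fun i : Fin (k : ℕ) => w (Fin.castLE (Nat.lt_succ_iff.mp k.isLt) i)),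
    lemA X hX' u1 t1 s2 t2 (fun j : Fin (n - (k : ℕ)) =>
      w ⟨(k : ℕ) + (j : ℕ), by have := j.isLt; have := k.isLt; omega⟩)]
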